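/- Fix q, ℓ ∈ ℕ* with m = 2^q and a BI-DMC W (Willie's channel) with Q_0 = W(·|0) everywhere positive and Q_1 = W(·|1). For each level j ∈ {1,…,q}, let 𝒞_j ⊆ {0,1}^ℓ be a codebook of size M_j, and for j ∈ {0,1,…,q} let P_{Z̃}^{(j)} be the pmf on 𝒵^{mℓ} induced by ℓ uses of the PPM super channel W̃ when levels 1,…,j carry i.i.d. uniform bits and each level j' > j carries a uniformly chosen codeword from 𝒞_{j'}; thus P_{Z̃}^{(0)} = P_{Z̃} is the distribution induced by the full scheme and P_{Z̃}^{(q)} = (Q_PPM^m)^{⊗ℓ}. Let W^j be the level-j equivalent channel built from Q_0, Q_1, let P_{Z̃^{(j)}} be the output pmf of (W^j)^{⊗ℓ} when the input is a uniformly chosen codeword of 𝒞_j, and let Q_{Z̃^{(j)}} be the single-use output pmf of W^j under a uniform input bit. If V(P_{Z̃^{(j)}}, Q_{Z̃^{(j)}}^{⊗ℓ}) ≤ δ_j, then V(P_{Z̃}^{(j−1)}, P_{Z̃}^{(j)}) ≤ δ_j, regardless of the codebooks used at levels j+1,…,q; consequently, if this holds for every j ∈ {1,…,q}, then V(P_{Z̃},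 (Q_PPM^m)^{⊗ℓ}) ≤ Σ_{j=1}^q δ_j. -/

import Mathlib

open Finset

def IsPMF {𝒵 : Type} [Fintype 𝒵] (P : 𝒵 → ℝ) : Prop :=
  (∀ z, 0 ≤ P z) ∧ ∑ z, P z = 1

/-- Least-significant-bit-first binary-to-decimal map. -/
def dIdx (q : ℕ) (x : Fin q → Bool) : ℕ :=
  ∑ j : Fin q, if x j then 2^(j:ℕ) else 0

lemma sum_two_pow (q : ℕ) : ∑ j ∈ Finset.range q, 2^j = 2^q - 1 := by
  induction q with
  | zero => simp
  | succ q ih =>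
    rw [Finset.sum_range_succ, ih, pow_succ]
    have : 0 < 2^q := pow_pos (by norm_num) q
    omega

lemma dIdx_lt (q : ℕ) (x : Fin q → Bool) : dIdx q x < 2^q := by
  have h1 : dIdx q x ≤ ∑ j : Fin q, 2^(j:ℕ) := by
    apply Finset.sum_le_sum
    intro j _
    split <;> simp
  have h2 : ∑ j : Fin q, 2^(j:ℕ) = 2^q - 1 := by
    rw [Fin.sum_univ_eq_sum_range (fun j => 2^j) q, sum_two_pow]
  have : 0 < 2^q := pow_pos (by norm_num) q
  omega

/-- Position (0-indexed) of the `1` in the PPM symbol encoding `x`. -/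
def ppmPos (q : ℕ) (x : Fin q → Bool) : Fin (2^q) := ⟨dIdx q x, dIdx_lt q x⟩

/-- PPM super channel of the binary-input channel `W`:
`W̃(yt|x) = P1(y_{d(x)}) ∏_{h ≠ d(x)} P0(y_h)`. -/
noncomputable def superCh {𝒴 : Type} [Fintype 𝒴] [DecidableEq 𝒴] (W : Bool → 𝒴 → ℝ)
    (q : ℕ) (x : Fin q → Bool) (yt : Fin (2^q) → 𝒴) : ℝ :=
  W true (yt (ppmPos q x)) * ∏ h ∈ univ.erase (ppmPos q x), W false (yt h)

/-- Conditional output pmf of the PPM super channel given the inputs off `S`: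
`P_{Ỹ|X_{S^c}}(yt|x_{S^c}) = 2^{−|S|} ∑_{x_S} W̃(yt|x)`. -/
noncomputable def condOut {𝒴 : Type} [Fintype 𝒴] [DecidableEq 𝒴] (W : Bool → 𝒴 → ℝ)
    (q : ℕ) (S : Finset (Fin q)) (x : Fin q → Bool) (yt : Fin (2^q) → 𝒴) : ℝ :=
  ((2:ℝ)^S.card)⁻¹ * ∑ xs : {i : Fin q // i ∈ S} → Bool,
    superCh W q (fun i => if h : i ∈ S then xs ⟨i, h⟩ else x i) yt

/-- Information density expectation `∑_{x,yt} 2^{−q} W̃(yt|x) log( P(yt|x_{A^c}) / P(yt|x_{B^c}) )`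
(natural logarithm); with `A = ∅` and `B = S` this is `I(X_S;Ỹ|X_{S^c})`. -/
noncomputable def infoDen {𝒴 : Type} [Fintype 𝒴] [DecidableEq 𝒴] (W : Bool → 𝒴 → ℝ)
    (q : ℕ) (A B : Finset (Fin q)) : ℝ :=
  ∑ x : Fin q → Bool, ∑ yt : Fin (2^q) → 𝒴,
    ((2:ℝ)^q)⁻¹ * superCh W q x yt * Real.log (condOut W q A x yt / condOut W q B x yt)

/-- Same with logarithm base 2 (information measured in bits). -/
noncomputable def infoDen2 {𝒴 : Type} [Fintype 𝒴] [DecidableEq 𝒴] (W : Bool → 𝒴 → ℝ)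
    (q : ℕ) (A B : Finset (Fin q)) : ℝ :=
  ∑ x : Fin q → Bool, ∑ yt : Fin (2^q) → 𝒴,
    ((2:ℝ)^q)⁻¹ * superCh W q x yt * Real.logb 2 (condOut W q A x yt / condOut W q B x yt)

/-- Indicator of a proposition. -/
noncomputable def ind (P : Prop) : ℝ := @ite ℝ P (Classical.propDecidable P) 1 0

/-- Total variation distance `V(P,Q) = (1/2)∑ |P−Q|`. -/
noncomputable def TV {α : Type} [Fintype α] (P Q : α → ℝ) : ℝ :=
  (1/2) * ∑ z, |P z - Q z|

/-- The level-`i` equivalent channel (for 0-indexed level `i₀`, take `i = i₀ + 1`). -/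
noncomputable def equivCh {𝒵 : Type} [Fintype 𝒵] (Q0 Q1 : 𝒵 → ℝ) (i : ℕ)
    (z : Fin (2^i) → 𝒵) (x : Bool) : ℝ :=
  ((2:ℝ)^(i-1))⁻¹ * ∑ j : Fin (2^i),
    if 2^(i-1) * (cond x 1 0) ≤ (j:ℕ) ∧ (j:ℕ) < 2^(i-1) * (cond x 1 0 + 1)
    then (∏ h, Q0 (z h)) * (Q1 (z j) / Q0 (z j)) else 0

/-- Distribution induced at Willie's output by `ℓ` uses of the PPM super channel when
the (0-indexed) levels `t < j` carry i.i.d. uniform bits and each level `t ≥ j`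
carries a uniformly chosen codeword from its codebook; `Pout … 0` is the distribution
induced by the full coding scheme and `Pout … q` the product PPM output
distribution. -/
noncomputable def Pout {𝒵 : Type} [Fintype 𝒵] [DecidableEq 𝒵] (W : Bool → 𝒵 → ℝ)
    (q ℓ : ℕ) (M : Fin q → ℕ) (c : ∀ t : Fin q, Fin (M t) → Fin ℓ → Bool) (j : ℕ)
    (zv : Fin ℓ → Fin (2^q) → 𝒵) : ℝ :=
  ∑ xs : {t : Fin q // (t:ℕ) < j} → Fin ℓ → Bool,
    ∑ u : ∀ t : {t : Fin q // j ≤ (t:ℕ)}, Fin (M t.1),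
      (∏ _t : {t : Fin q // (t:ℕ) < j}, ((2:ℝ)^ℓ)⁻¹) *
      (∏ t : {t : Fin q // j ≤ (t:ℕ)}, ((M t.1 : ℝ))⁻¹) *
      ∏ p, superCh W q
        (fun t => if h : (t:ℕ) < j then xs ⟨t, h⟩ p
                  else c t (u ⟨t, Nat.le_of_not_lt h⟩) p)
        (zv p)


def piSplitEquiv {ι : Type} {β : ι → Type}
    {P P' : ι → Prop} [DecidablePred P']
    (a : ι) (hPa : P a) (hP'a : ¬ P' a) (heq : ∀ i, P i → ¬ P' i → i = a)
    (hPP' : ∀ i, P' i → P i) :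
    (∀ i : {i // P i}, β i.1) ≃ β a × (∀ i : {i // P' i}, β i.1) where
  toFun g := (g ⟨a, hPa⟩, fun i => g ⟨i.1, hPP' i.1 i.2⟩)
  invFun bh := fun i => if hc : P' i.1 then bh.2 ⟨i.1, hc⟩
      else cast (congrArg β (heq i.1 i.2 hc).symm) bh.1
  left_inv g := by
    funext i
    by_cases hc : P' i.1
    · simp only [dif_pos hc]
    · simp only [dif_neg hc]
      obtain ⟨iv, hiv⟩ := i
      have e : iv = a := heq iv hiv hc
      subst e
      rfl
  right_inv bh := by
    obtain ⟨b, h⟩ := bh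
    dsimp only
    refine Prod.ext ?_ ?_
    · simp only [dif_neg hP'a]
      rfl
    · funext i
      simp only [dif_pos i.2]

-- chunk 2

lemma pi_split_sum {ι : Type} [Fintype ι] {β : ι → Type} [∀ i, Fintype (β i)]
    [DecidableEq ι]
    {P P' : ι → Prop} [DecidablePred P] [DecidablePred P']
    (a : ι) (hPa : P a) (hP'a : ¬ P' a) (heq : ∀ i, P i → ¬ P' i → i = a)
    (hPP' : ∀ i, P' i → P i)
    (f : (∀ i : {i // P i}, β i.1) → ℝ) :
    ∑ g : ∀ i : {i // P i}, β i.1, f g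
      = ∑ b : β a, ∑ h : ∀ i : {i // P' i}, β i.1,
          f (fun i => if hc : P' i.1 then h ⟨i.1, hc⟩
              else cast (congrArg β (heq i.1 i.2 hc).symm) b) := by
  calc ∑ g : ∀ i : {i // P i}, β i.1, f g
      = ∑ x : β a × (∀ i : {i // P' i}, β i.1),
          f ((piSplitEquiv a hPa hP'a heq hPP').symm x) :=
        ((piSplitEquiv a hPa hP'a heq hPP').symm.sum_comp f).symm
    _ = _ := Fintype.sum_prod_type _

lemma dIdx_cons (n : ℕ) (b : Bool) (x : Fin n → Bool) :
    dIdx (n+1) (Fin.cons b x) = (cond b 1 0) + 2 * dIdx n x := by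
  unfold dIdx
  rw [Fin.sum_univ_succ]
  congr 1
  · cases b <;> rfl
  · rw [Finset.mul_sum]
    refine Finset.sum_congr rfl fun i _ => ?_
    simp only [Fin.cons_succ, Fin.val_succ]
    cases x i <;> simp [pow_succ] <;> ring

lemma dIdx_injective (n : ℕ) : Function.Injective (dIdx n) := by
  induction n with
  | zero =>
    intro x y _
    funext i
    exact absurd i.2 (Nat.not_lt_zero _)
  | succ n ih =>
    intro x y hxy
    rw [← Fin.cons_self_tail x, ← Fin.cons_self_tail y] at hxy ⊢
    rw [dIdx_cons, dIdx_cons] at hxy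
    have hb : x 0 = y 0 := by
      cases hx : x 0 <;> cases hy : y 0 <;> rw [hx, hy] at hxy <;> simp at hxy ⊢ <;> omega
    have ht : Fin.tail x = Fin.tail y := by
      apply ih
      cases hx : x 0 <;> cases hy : y 0 <;> rw [hx, hy] at hxy <;> simp at hxy <;> omega
    rw [hb, ht]

lemma ppmPos_bijective (n : ℕ) : Function.Bijective (ppmPos n) := by
  rw [Fintype.bijective_iff_injective_and_card]
  constructor
  · intro x y h
    exact dIdx_injective n (congrArg Fin.val h)
  · simp [Fintype.card_fun]

lemma sum_ppmPos {n : ℕ} (f : Fin (2^n) → ℝ) :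
    ∑ x : Fin n → Bool, f (ppmPos n x) = ∑ k, f k :=
  Fintype.sum_bijective _ (ppmPos_bijective n) _ _ (fun _ => rfl)

lemma sum_prod_ind {α κ : Type} [Fintype α] [Fintype κ] [DecidableEq κ] (F : (κ → α) → ℝ) (v : κ → α) :
    ∑ z : κ → α, F z * ∏ r, ind (v r = z r) = F v := by
  rw [Finset.sum_eq_single v]
  · simp [ind]
  · intro z _ hz
    obtain ⟨r, hr⟩ := Function.ne_iff.mp (Ne.symm hz)
    have : ind (v r = z r) = 0 := by simp [ind, hr]
    rw [Finset.prod_eq_zero (Finset.mem_univ r) this, mul_zero]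
  · intro h
    exact absurd (Finset.mem_univ v) h

def eS (q j : ℕ) (h : j ≤ q) : Fin j ≃ {i : Fin q // (i:ℕ) < j} where
  toFun r := ⟨⟨r, lt_of_lt_of_le r.2 h⟩, r.2⟩
  invFun i := ⟨i.1, i.2⟩
  left_inv r := rfl
  right_inv i := rfl

lemma cardS (q j : ℕ) (h : j ≤ q) : Fintype.card {i : Fin q // (i:ℕ) < j} = j := by
  rw [← Fintype.card_congr (eS q j h), Fintype.card_fin]


lemma cast_self {A : Sort*} (h : A = A) (a : A) : cast h a = a := rfl

lemma TV_nonneg {α : Type} [Fintype α] (P Q : α → ℝ) : 0 ≤ TV P Q := by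
  have : (0:ℝ) ≤ ∑ z, |P z - Q z| := Finset.sum_nonneg fun z _ => abs_nonneg _
  unfold TV; linarith

lemma TV_self {α : Type} [Fintype α] (P : α → ℝ) : TV P P = 0 := by simp [TV]

lemma TV_triangle {α : Type} [Fintype α] (P Q R : α → ℝ) : TV P R ≤ TV P Q + TV Q R := by
  unfold TV
  rw [← mul_add, ← Finset.sum_add_distrib]
  have h := Finset.sum_le_sum (fun z (_ : z ∈ (univ : Finset α)) => abs_sub_le (P z) (Q z) (R z))
  linarith

lemma TV_contract {α β : Type} [Fintype α] [Fintype β] (P Q : α → ℝ) (K : α → β → ℝ)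
    (hK0 : ∀ a b, 0 ≤ K a b) (hK1 : ∀ a, ∑ b, K a b = 1) :
    TV (fun b => ∑ a, P a * K a b) (fun b => ∑ a, Q a * K a b) ≤ TV P Q := by
  unfold TV
  have h1 : ∀ b, |∑ a, P a * K a b - ∑ a, Q a * K a b| ≤ ∑ a, |P a - Q a| * K a b := by
    intro b
    rw [← Finset.sum_sub_distrib]
    refine (Finset.abs_sum_le_sum_abs _ _).trans ?_
    refine Finset.sum_le_sum fun a _ => ?_
    rw [← sub_mul, abs_mul, abs_of_nonneg (hK0 a b)]
  have h2 : ∑ b, |∑ a, P a * K a b - ∑ a, Q a * K a b| ≤ ∑ z, |P z - Q z| := by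
    calc ∑ b, |∑ a, P a * K a b - ∑ a, Q a * K a b|
        ≤ ∑ b, ∑ a, |P a - Q a| * K a b := Finset.sum_le_sum fun b _ => h1 b
      _ = ∑ a, ∑ b, |P a - Q a| * K a b := Finset.sum_comm
      _ = ∑ z, |P z - Q z| := by
          refine Finset.sum_congr rfl fun a _ => ?_
          rw [← Finset.mul_sum, hK1 a, mul_one]
  linarith


-- ===== chunk 3 : interval/block machinery =====

def encF (q j HV : ℕ) (hb : 2^(j+1) * (HV+1) ≤ 2^q) (r : Fin (2^(j+1))) : Fin (2^q) :=
  ⟨2^(j+1) * HV + (r:ℕ), by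
    have h2 : 2^(j+1)*(HV+1) = 2^(j+1)*HV + 2^(j+1) := by ring
    have := r.2; omega⟩

lemma enc_bound (q j HV : ℕ) (hjq : j < q) (hHV : HV < 2^(q-(j+1))) :
    2^(j+1)*(HV+1) ≤ 2^q := by
  calc 2^(j+1)*(HV+1) ≤ 2^(j+1) * 2^(q-(j+1)) := Nat.mul_le_mul_left _ hHV
    _ = 2^q := by rw [← pow_add]; congr 1; omega

lemma prod_block {R : Type} [CommMonoid R] (q j HV : ℕ) (hb : 2^(j+1)*(HV+1) ≤ 2^q)
    (f : Fin (2^q) → R) :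
    ∏ pos ∈ univ.filter (fun pos : Fin (2^q) => (pos:ℕ)/2^(j+1) = HV), f pos
      = ∏ r : Fin (2^(j+1)), f (encF q j HV hb r) := by
  refine Finset.prod_nbij'
    (fun pos => (⟨(pos:ℕ) % 2^(j+1), Nat.mod_lt _ (Nat.two_pow_pos _)⟩ : Fin (2^(j+1))))
    (fun r => encF q j HV hb r) ?_ ?_ ?_ ?_ ?_
  · intro a _; exact mem_univ _
  · intro r _
    simp only [mem_filter, mem_univ, true_and, encF]
    rw [Nat.mul_add_div (Nat.two_pow_pos _)]
    rw [Nat.div_eq_of_lt r.2, add_zero]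
  · intro pos hpos
    simp only [mem_filter, mem_univ, true_and] at hpos
    apply Fin.ext
    simp only [encF]
    conv_rhs => rw [← Nat.div_add_mod (pos:ℕ) (2^(j+1))]
    rw [hpos]
  · intro r _
    apply Fin.ext
    simp only [encF, Nat.mul_add_mod]
    exact Nat.mod_eq_of_lt r.2
  · intro pos hpos
    simp only [mem_filter, mem_univ, true_and] at hpos
    congr 1
    apply Fin.ext
    simp only [encF]
    conv_lhs => rw [← Nat.div_add_mod (pos:ℕ) (2^(j+1))]
    rw [hpos]

/-- sum over boolean assignments of lower levels = sum over range 2^j -/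
lemma sum_low (q j : ℕ) (h : j ≤ q) (f : ℕ → ℝ) :
    ∑ y : {i : Fin q // (i:ℕ) < j} → Bool,
        f (∑ i : {i : Fin q // (i:ℕ) < j}, if y i then 2^((i.1:ℕ)) else 0)
      = ∑ k ∈ Finset.range (2^j), f k := by
  have step1 : ∀ y : {i : Fin q // (i:ℕ) < j} → Bool,
      (∑ i : {i : Fin q // (i:ℕ) < j}, if y i then 2^((i.1:ℕ)) else 0)
        = dIdx j (fun r => y (eS q j h r)) := fun y =>
    (Fintype.sum_equiv (eS q j h)
      (fun r => if y (eS q j h r) then 2^((r:ℕ)) else 0)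
      (fun i => if y i then 2^((i.1:ℕ)) else 0) (fun r => rfl)).symm
  calc ∑ y : {i : Fin q // (i:ℕ) < j} → Bool,
        f (∑ i, if y i then 2^((i.1:ℕ)) else 0)
      = ∑ w : Fin j → Bool, f (dIdx j w) := by
        refine Fintype.sum_equiv (Equiv.arrowCongr (eS q j h) (Equiv.refl Bool)).symm
          (fun y => f (∑ i, if y i then 2^((i.1:ℕ)) else 0))
          (fun w => f (dIdx j w)) (fun y => ?_)
        rw [step1 y]
        rfl
    _ = ∑ k : Fin (2^j), f (k:ℕ) := sum_ppmPos (fun k => f (k:ℕ))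
    _ = ∑ k ∈ Finset.range (2^j), f k := by
        rw [Fin.sum_univ_eq_sum_range (fun k => f k) (2^j)]

-- ===== chunk 4 =====

lemma hi_le (q j : ℕ) (Y : {i : Fin q // j+1 ≤ (i:ℕ)} → Bool) :
    (∑ i : {i : Fin q // j+1 ≤ (i:ℕ)}, if Y i then 2^((i.1:ℕ)-(j+1)) else 0)
      < 2^(q-(j+1)) := by
  have h1 : (∑ i : {i : Fin q // j+1 ≤ (i:ℕ)}, if Y i then 2^((i.1:ℕ)-(j+1)) else 0)
      ≤ ∑ i : {i : Fin q // j+1 ≤ (i:ℕ)}, 2^((i.1:ℕ)-(j+1)) := by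
    apply Finset.sum_le_sum
    intro i _
    split
    · exact le_rfl
    · exact Nat.zero_le _
  have h2 : (∑ i : {i : Fin q // j+1 ≤ (i:ℕ)}, 2^((i.1:ℕ)-(j+1)))
      = ∑ i ∈ univ.filter (fun i : Fin q => j+1 ≤ (i:ℕ)), 2^((i:ℕ)-(j+1)) :=
    (Finset.sum_subtype (p := fun i : Fin q => j+1 ≤ (i:ℕ))
      (univ.filter (fun i : Fin q => j+1 ≤ (i:ℕ))) (fun x => by simp)
      (fun i => 2^((i:ℕ)-(j+1)))).symm
  have h3 : (∑ i ∈ univ.filter (fun i : Fin q => j+1 ≤ (i:ℕ)), 2^((i:ℕ)-(j+1)))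
      = ∑ r ∈ (univ.filter (fun i : Fin q => j+1 ≤ (i:ℕ))).image
          (fun i : Fin q => (i:ℕ)-(j+1)), 2^r := by
    rw [Finset.sum_image]
    intro a ha b hb hab
    simp only [Finset.mem_coe, mem_filter] at ha hb
    have hab' : (a:ℕ) - (j+1) = (b:ℕ) - (j+1) := hab
    apply Fin.ext
    omega
  have h4 : (univ.filter (fun i : Fin q => j+1 ≤ (i:ℕ))).image
      (fun i : Fin q => (i:ℕ)-(j+1)) ⊆ Finset.range (q-(j+1)) := by
    intro r hr
    simp only [Finset.mem_image, mem_filter] at hr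
    obtain ⟨i, ⟨_, hi⟩, rfl⟩ := hr
    have := i.2
    simp only [Finset.mem_range]
    omega
  have h5 := Finset.sum_le_sum_of_subset h4 (f := fun r => 2^r)
  rw [sum_two_pow] at h5
  beta_reduce at h5
  have h6 : 0 < 2^(q-(j+1)) := Nat.two_pow_pos _
  omega

lemma lv_lt (q j : ℕ) (h : j ≤ q) (y : {i : Fin q // (i:ℕ) < j} → Bool) :
    (∑ i : {i : Fin q // (i:ℕ) < j}, if y i then 2^((i.1:ℕ)) else 0) < 2^j := by
  have h1 : (∑ i : {i : Fin q // (i:ℕ) < j}, if y i then 2^((i.1:ℕ)) else 0)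
      ≤ ∑ i : {i : Fin q // (i:ℕ) < j}, 2^((i.1:ℕ)) := by
    apply Finset.sum_le_sum
    intro i _
    split
    · exact le_rfl
    · exact Nat.zero_le _
  have h2 : (∑ i : {i : Fin q // (i:ℕ) < j}, 2^((i.1:ℕ))) = ∑ r ∈ Finset.range j, 2^r := by
    rw [← Fin.sum_univ_eq_sum_range (fun r => 2^r) j]
    exact (Fintype.sum_equiv (eS q j h) _ _ (fun r => rfl)).symm
  rw [sum_two_pow] at h2
  have h6 : 0 < 2^j := Nat.two_pow_pos _
  omega

lemma dIdx_decomp (q j : ℕ) (hjq : j < q) (X : Fin q → Bool) :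
    dIdx q X = (∑ i : {i : Fin q // (i:ℕ) < j}, if X i.1 then 2^((i.1:ℕ)) else 0)
      + 2^j * (cond (X ⟨j, hjq⟩) 1 0)
      + 2^(j+1) * (∑ i : {i : Fin q // j+1 ≤ (i:ℕ)}, if X i.1 then 2^((i.1:ℕ)-(j+1)) else 0) := by
  unfold dIdx
  rw [← Finset.sum_filter_add_sum_filter_not univ (fun i : Fin q => (i:ℕ) < j)]
  have hset : univ.filter (fun i : Fin q => ¬ (i:ℕ) < j)
      = insert (⟨j, hjq⟩ : Fin q) (univ.filter (fun i : Fin q => j+1 ≤ (i:ℕ))) := by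
    ext i
    simp only [mem_filter, mem_univ, true_and, Finset.mem_insert, Fin.ext_iff]
    omega
  rw [hset, Finset.sum_insert (by simp)]
  have e1 : ∑ i ∈ univ.filter (fun i : Fin q => (i:ℕ) < j), (if X i then 2^((i:ℕ)) else 0)
      = ∑ i : {i : Fin q // (i:ℕ) < j}, if X i.1 then 2^((i.1:ℕ)) else 0 :=
    Finset.sum_subtype _ (by simp) _
  have e2 : (if X ⟨j, hjq⟩ then 2^j else 0) = 2^j * (cond (X ⟨j, hjq⟩) 1 0) := by
    cases hx : X ⟨j, hjq⟩ <;> simp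
  have e3 : ∑ i ∈ univ.filter (fun i : Fin q => j+1 ≤ (i:ℕ)), (if X i then 2^((i:ℕ)) else 0)
      = 2^(j+1) * (∑ i : {i : Fin q // j+1 ≤ (i:ℕ)}, if X i.1 then 2^((i.1:ℕ)-(j+1)) else 0) := by
    calc ∑ i ∈ univ.filter (fun i : Fin q => j+1 ≤ (i:ℕ)), (if X i then 2^((i:ℕ)) else 0)
        = ∑ i : {i : Fin q // j+1 ≤ (i:ℕ)}, (if X i.1 then 2^((i.1:ℕ)) else 0) :=
          Finset.sum_subtype _ (by simp) _
      _ = ∑ i : {i : Fin q // j+1 ≤ (i:ℕ)},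
            2^(j+1) * (if X i.1 then 2^((i.1:ℕ)-(j+1)) else 0) := by
          refine Finset.sum_congr rfl fun i _ => ?_
          have hi := i.2
          cases hx : X i.1
          · simp
          · simp only [if_true]
            rw [← pow_add]
            congr 1
            omega
      _ = 2^(j+1) * (∑ i : {i : Fin q // j+1 ≤ (i:ℕ)},
            if X i.1 then 2^((i.1:ℕ)-(j+1)) else 0) := (Finset.mul_sum _ _ _).symm
  rw [e1, e2, e3]
  ring

-- ===== chunk 5 : defs and channel rewrites =====

section Main
variable {𝒵 : Type} [Fintype 𝒵] [DecidableEq 𝒵]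

def hvF (q ℓ : ℕ) (M : Fin q → ℕ) (c : ∀ t : Fin q, Fin (M t) → Fin ℓ → Bool) (j : ℕ)
    (u : ∀ i : {i : Fin q // j+1 ≤ (i:ℕ)}, Fin (M i.1)) (p : Fin ℓ) : ℕ :=
  ∑ i : {i : Fin q // j+1 ≤ (i:ℕ)}, if c i.1 (u i) p then 2^((i.1:ℕ)-(j+1)) else 0

lemma hvF_lt (q ℓ : ℕ) (M : Fin q → ℕ) (c : ∀ t : Fin q, Fin (M t) → Fin ℓ → Bool) (j : ℕ)
    (u : ∀ i : {i : Fin q // j+1 ≤ (i:ℕ)}, Fin (M i.1)) (p : Fin ℓ) :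
    hvF q ℓ M c j u p < 2^(q-(j+1)) := hi_le q j _

noncomputable def gfun (Q0 : 𝒵 → ℝ) (q j HV : ℕ) (zb : Fin (2^(j+1)) → 𝒵)
    (pos : Fin (2^q)) (y : 𝒵) : ℝ :=
  if (pos:ℕ)/2^(j+1) = HV
  then ind (y = zb ⟨(pos:ℕ) % 2^(j+1), Nat.mod_lt _ (Nat.two_pow_pos _)⟩)
  else Q0 y

noncomputable def K2 (W : Bool → 𝒵 → ℝ) (q ℓ : ℕ) (M : Fin q → ℕ)
    (c : ∀ t : Fin q, Fin (M t) → Fin ℓ → Bool) (j : ℕ)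
    (zeq : Fin ℓ → Fin (2^(j+1)) → 𝒵) (zv : Fin ℓ → Fin (2^q) → 𝒵) : ℝ :=
  ∑ u : ∀ i : {i : Fin q // j+1 ≤ (i:ℕ)}, Fin (M i.1),
    (∏ i : {i : Fin q // j+1 ≤ (i:ℕ)}, ((M i.1 : ℝ))⁻¹) *
    ∏ p, ∏ pos, gfun (W false) q j (hvF q ℓ M c j u p) (zeq p) pos (zv p pos)

noncomputable def Kker (W : Bool → 𝒵 → ℝ) (q ℓ : ℕ) (M : Fin q → ℕ)
    (c : ∀ t : Fin q, Fin (M t) → Fin ℓ → Bool) (j : ℕ) (b : Fin ℓ → Bool)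
    (zv : Fin ℓ → Fin (2^q) → 𝒵) : ℝ :=
  ∑ xs : {i : Fin q // (i:ℕ) < j} → Fin ℓ → Bool,
  ∑ u : ∀ i : {i : Fin q // j+1 ≤ (i:ℕ)}, Fin (M i.1),
    (∏ _i : {i : Fin q // (i:ℕ) < j}, ((2:ℝ)^ℓ)⁻¹) *
    (∏ i : {i : Fin q // j+1 ≤ (i:ℕ)}, ((M i.1 : ℝ))⁻¹) *
    ∏ p, superCh W q (fun i => if h : (i:ℕ) < j then xs ⟨i, h⟩ p
        else if h2 : j+1 ≤ (i:ℕ) then c i (u ⟨i, h2⟩) p else b p) (zv p)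

/-- the equivalent-channel summand: `(∏ Q0 on block) * (Q1/Q0 at offset LV+2^j xt)` -/
noncomputable def equivChArg (W : Bool → 𝒵 → ℝ) (q j HV : ℕ) (hb : 2^(j+1) * (HV+1) ≤ 2^q)
    (zz : Fin (2^q) → 𝒵) (LV : ℕ) (xt : Bool) : ℝ :=
  (∏ r, W false (zz (encF q j HV hb r)))
    * (W true (zz (encF q j HV hb
          ⟨(2^j * (cond xt 1 0) + LV) % 2^(j+1), Nat.mod_lt _ (Nat.two_pow_pos _)⟩))
      / W false (zz (encF q j HV hb
          ⟨(2^j * (cond xt 1 0) + LV) % 2^(j+1), Nat.mod_lt _ (Nat.two_pow_pos _)⟩)))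

lemma superCh_eq (W : Bool → 𝒵 → ℝ) (hpos : ∀ z, 0 < W false z) (q : ℕ)
    (X : Fin q → Bool) (zt : Fin (2^q) → 𝒵) :
    superCh W q X zt = (∏ pos, W false (zt pos)) *
      (W true (zt (ppmPos q X)) / W false (zt (ppmPos q X))) := by
  unfold superCh
  rw [← Finset.mul_prod_erase univ (fun pos => W false (zt pos)) (mem_univ (ppmPos q X))]
  have h0 : W false (zt (ppmPos q X)) ≠ 0 := ne_of_gt (hpos _)
  field_simp

lemma equivCh_interval (Q0 Q1 : 𝒵 → ℝ) (j : ℕ) (z : Fin (2^(j+1)) → 𝒵) (x : Bool) :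
    equivCh Q0 Q1 (j+1) z x
      = ((2:ℝ)^j)⁻¹ * ∑ k ∈ Finset.range (2^j),
          (∏ h, Q0 (z h)) *
            (Q1 (z ⟨(2^j * (cond x 1 0) + k) % 2^(j+1), Nat.mod_lt _ (Nat.two_pow_pos _)⟩) /
             Q0 (z ⟨(2^j * (cond x 1 0) + k) % 2^(j+1), Nat.mod_lt _ (Nat.two_pow_pos _)⟩)) := by
  unfold equivCh
  simp only [Nat.add_sub_cancel]
  congr 1
  rw [← Finset.sum_filter]
  have hpow : 2^(j+1) = 2*2^j := by rw [pow_succ]; ring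
  have hcb : cond x 1 0 ≤ 1 := by cases x <;> simp
  have hmem : ∀ k ∈ Finset.range (2^j), (2^j * (cond x 1 0) + k) % 2^(j+1) = 2^j * (cond x 1 0) + k := by
    intro k hk
    simp only [Finset.mem_range] at hk
    apply Nat.mod_eq_of_lt
    cases x <;> simp <;> omega
  refine Finset.sum_nbij' (fun kk => (kk:ℕ) - 2^j * (cond x 1 0))
    (fun k => (⟨(2^j * (cond x 1 0) + k) % 2^(j+1), Nat.mod_lt _ (Nat.two_pow_pos _)⟩ : Fin (2^(j+1))))
    ?_ ?_ ?_ ?_ ?_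
  · intro kk hkk
    simp only [mem_filter, mem_univ, true_and] at hkk
    simp only [Finset.mem_range]
    cases x <;> simp at hkk ⊢ <;> omega
  · intro k hk
    simp only [mem_filter, mem_univ, true_and]
    rw [hmem k hk]
    simp only [Finset.mem_range] at hk
    cases x <;> simp <;> omega
  · intro kk hkk
    simp only [mem_filter, mem_univ, true_and] at hkk
    apply Fin.ext
    simp only []
    have h2 : 2^j * (cond x 1 0) + ((kk:ℕ) - 2^j * (cond x 1 0)) = (kk:ℕ) := by omega
    rw [h2, Nat.mod_eq_of_lt kk.2]
  · intro k hk
    show (((2^j * (cond x 1 0)) + k) % 2^(j+1)) - 2^j*(cond x 1 0) = k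
    rw [hmem k hk]
    simp only [Finset.mem_range] at hk
    omega
  · intro kk hkk
    simp only [mem_filter, mem_univ, true_and] at hkk
    beta_reduce
    have h3 : 2^j * (cond x 1 0) + ((kk:ℕ) - 2^j * (cond x 1 0)) = (kk:ℕ) := by omega
    have h4 : (⟨(2^j * (cond x 1 0) + ((kk:ℕ) - 2^j * (cond x 1 0))) % 2^(j+1),
        Nat.mod_lt _ (Nat.two_pow_pos _)⟩ : Fin (2^(j+1))) = kk := by
      apply Fin.ext
      show (2^j * (cond x 1 0) + ((kk:ℕ) - 2^j * (cond x 1 0))) % 2^(j+1) = (kk:ℕ)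
      rw [h3, Nat.mod_eq_of_lt kk.2]
    rw [h4]

lemma w2_eq (q j ℓ : ℕ) (h : j ≤ q) :
    (∏ _i : {i : Fin q // (i:ℕ) < j}, ((2:ℝ)^ℓ)⁻¹) = ∏ _p : Fin ℓ, ((2:ℝ)^j)⁻¹ := by
  rw [Finset.prod_const, Finset.prod_const, Finset.card_univ, Finset.card_univ,
    cardS q j h, Fintype.card_fin, ← inv_pow, ← inv_pow, ← pow_mul, ← pow_mul, mul_comm]

lemma wlow_split (q j : ℕ) (hjq : j < q) (C : ℝ) :
    (∏ _i : {i : Fin q // (i:ℕ) < j+1}, C) = C * ∏ _i : {i : Fin q // (i:ℕ) < j}, C := by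
  rw [Finset.prod_const, Finset.prod_const, Finset.card_univ, Finset.card_univ,
    cardS q (j+1) hjq, cardS q j (le_of_lt hjq), pow_succ]
  ring

lemma prod_split_ge (q : ℕ) (t : Fin q) (f : Fin q → ℝ) :
    (∏ i : {i : Fin q // (t:ℕ) ≤ (i:ℕ)}, f i.1)
      = f t * ∏ i : {i : Fin q // (t:ℕ)+1 ≤ (i:ℕ)}, f i.1 := by
  rw [← Finset.prod_subtype (p := fun i : Fin q => (t:ℕ) ≤ (i:ℕ))
      (univ.filter (fun i : Fin q => (t:ℕ) ≤ (i:ℕ))) (fun x => by simp) f,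
    ← Finset.prod_subtype (p := fun i : Fin q => (t:ℕ)+1 ≤ (i:ℕ))
      (univ.filter (fun i : Fin q => (t:ℕ)+1 ≤ (i:ℕ))) (fun x => by simp) f]
  have hset : univ.filter (fun i : Fin q => (t:ℕ) ≤ (i:ℕ))
      = insert t (univ.filter (fun i : Fin q => (t:ℕ)+1 ≤ (i:ℕ))) := by
    ext i
    simp only [mem_filter, mem_univ, true_and, Finset.mem_insert, Fin.ext_iff]
    omega
  rw [hset, Finset.prod_insert (by simp)]

lemma superCh_decomp' (W : Bool → 𝒵 → ℝ) (hpos : ∀ z, 0 < W false z) (q j : ℕ)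
    (hjq : j < q) (X : Fin q → Bool) (zz : Fin (2^q) → 𝒵) (HV LV : ℕ) (xt : Bool)
    (hHV : HV = ∑ i : {i : Fin q // j+1 ≤ (i:ℕ)}, if X i.1 then 2^((i.1:ℕ)-(j+1)) else 0)
    (hLV : LV = ∑ i : {i : Fin q // (i:ℕ) < j}, if X i.1 then 2^((i.1:ℕ)) else 0)
    (hxt : xt = X ⟨j, hjq⟩)
    (hb : 2^(j+1) * (HV+1) ≤ 2^q) :
    superCh W q X zz
      = equivChArg W q j HV hb zz LV xt
        * ∏ pos ∈ univ.filter (fun pos : Fin (2^q) => ¬ ((pos:ℕ)/2^(j+1) = HV)),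
            W false (zz pos) := by
  have hLVlt : LV < 2^j := by
    rw [hLV]; exact lv_lt q j (le_of_lt hjq) (fun i => X i.1)
  have hpow : 2^(j+1) = 2*2^j := by rw [pow_succ]; ring
  have hmod : (2^j * (cond xt 1 0) + LV) % 2^(j+1) = 2^j * (cond xt 1 0) + LV := by
    apply Nat.mod_eq_of_lt
    cases xt <;> simp <;> omega
  have hD : ppmPos q X = encF q j HV hb
      ⟨(2^j * (cond xt 1 0) + LV) % 2^(j+1), Nat.mod_lt _ (Nat.two_pow_pos _)⟩ := by
    apply Fin.ext
    show dIdx q X = 2^(j+1)*HV + (2^j * (cond xt 1 0) + LV) % 2^(j+1)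
    rw [dIdx_decomp q j hjq X, ← hHV, ← hLV, ← hxt, hmod]
    ring
  rw [superCh_eq W hpos q X zz, hD]
  rw [← Finset.prod_filter_mul_prod_filter_not univ
    (fun pos : Fin (2^q) => (pos:ℕ)/2^(j+1) = HV) (fun pos => W false (zz pos))]
  rw [prod_block q j HV hb (fun pos => W false (zz pos))]
  unfold equivChArg
  ring

lemma innerZsum (W : Bool → 𝒵 → ℝ) (q j : ℕ) (HV : ℕ) (hb : 2^(j+1)*(HV+1) ≤ 2^q)
    (zz : Fin (2^q) → 𝒵) (x : Bool) :
    ∑ zb : Fin (2^(j+1)) → 𝒵,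
        equivCh (W false) (W true) (j+1) zb x * ∏ pos, gfun (W false) q j HV zb pos (zz pos)
      = equivCh (W false) (W true) (j+1) (fun r => zz (encF q j HV hb r)) x
        * ∏ pos ∈ univ.filter (fun pos : Fin (2^q) => ¬ ((pos:ℕ)/2^(j+1) = HV)),
            W false (zz pos) := by
  have hidx : ∀ r : Fin (2^(j+1)),
      (⟨((encF q j HV hb r : Fin (2^q)):ℕ) % 2^(j+1), Nat.mod_lt _ (Nat.two_pow_pos _)⟩
        : Fin (2^(j+1))) = r := by
    intro r
    apply Fin.ext
    show (2^(j+1)*HV + (r:ℕ)) % 2^(j+1) = r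
    rw [Nat.mul_add_mod]
    exact Nat.mod_eq_of_lt r.2
  calc ∑ zb : Fin (2^(j+1)) → 𝒵,
        equivCh (W false) (W true) (j+1) zb x * ∏ pos, gfun (W false) q j HV zb pos (zz pos)
      = ∑ zb : Fin (2^(j+1)) → 𝒵,
          (equivCh (W false) (W true) (j+1) zb x
            * ∏ pos ∈ univ.filter (fun pos : Fin (2^q) => ¬ ((pos:ℕ)/2^(j+1) = HV)),
                W false (zz pos))
          * ∏ r, ind (zz (encF q j HV hb r) = zb r) := by
        refine Finset.sum_congr rfl fun zb _ => ?_
        rw [← Finset.prod_filter_mul_prod_filter_not univ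
          (fun pos : Fin (2^q) => (pos:ℕ)/2^(j+1) = HV)
          (fun pos => gfun (W false) q j HV zb pos (zz pos))]
        have h1 : (∏ pos ∈ univ.filter (fun pos : Fin (2^q) => (pos:ℕ)/2^(j+1) = HV),
            gfun (W false) q j HV zb pos (zz pos))
            = ∏ r, ind (zz (encF q j HV hb r) = zb r) := by
          rw [prod_block q j HV hb (fun pos => gfun (W false) q j HV zb pos (zz pos))]
          refine Finset.prod_congr rfl fun r _ => ?_
          unfold gfun
          rw [if_pos (show ((encF q j HV hb r : Fin (2^q)):ℕ)/2^(j+1) = HV by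
            show (2^(j+1)*HV + (r:ℕ)) / 2^(j+1) = HV
            rw [Nat.mul_add_div (Nat.two_pow_pos _), Nat.div_eq_of_lt r.2, add_zero])]
          rw [hidx r]
        have h2 : (∏ pos ∈ univ.filter (fun pos : Fin (2^q) => ¬((pos:ℕ)/2^(j+1) = HV)),
            gfun (W false) q j HV zb pos (zz pos))
            = ∏ pos ∈ univ.filter (fun pos : Fin (2^q) => ¬((pos:ℕ)/2^(j+1) = HV)),
                W false (zz pos) := by
          refine Finset.prod_congr rfl fun pos hpos => ?_
          simp only [mem_filter, mem_univ, true_and] at hpos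
          unfold gfun
          rw [if_neg hpos]
        rw [h1, h2]
        ring
    _ = equivCh (W false) (W true) (j+1) (fun r => zz (encF q j HV hb r)) x
        * ∏ pos ∈ univ.filter (fun pos : Fin (2^q) => ¬ ((pos:ℕ)/2^(j+1) = HV)),
            W false (zz pos) :=
      sum_prod_ind (fun zb => equivCh (W false) (W true) (j+1) zb x
        * ∏ pos ∈ univ.filter (fun pos : Fin (2^q) => ¬ ((pos:ℕ)/2^(j+1) = HV)),
            W false (zz pos)) (fun r => zz (encF q j HV hb r))

lemma sum_xs (q j ℓ : ℕ) (h : j ≤ q) (F : Fin ℓ → ℕ → ℝ) :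
    ∑ xs : {i : Fin q // (i:ℕ) < j} → Fin ℓ → Bool,
      ∏ p, F p (∑ i : {i : Fin q // (i:ℕ) < j}, if xs i p then 2^((i.1:ℕ)) else 0)
    = ∏ p, ∑ k ∈ Finset.range (2^j), F p k := by
  calc ∑ xs : {i : Fin q // (i:ℕ) < j} → Fin ℓ → Bool,
      ∏ p, F p (∑ i : {i : Fin q // (i:ℕ) < j}, if xs i p then 2^((i.1:ℕ)) else 0)
      = ∑ Y : Fin ℓ → ({i : Fin q // (i:ℕ) < j} → Bool),
          ∏ p, F p (∑ i : {i : Fin q // (i:ℕ) < j}, if Y p i then 2^((i.1:ℕ)) else 0) :=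
      Fintype.sum_equiv (Equiv.piComm fun (_ : {i : Fin q // (i:ℕ) < j}) (_ : Fin ℓ) => Bool)
        _ _ (fun xs => rfl)
    _ = ∏ p, ∑ y : {i : Fin q // (i:ℕ) < j} → Bool,
          F p (∑ i : {i : Fin q // (i:ℕ) < j}, if y i then 2^((i.1:ℕ)) else 0) := by
        rw [Finset.prod_univ_sum, Fintype.piFinset_univ]
    _ = ∏ p, ∑ k ∈ Finset.range (2^j), F p k :=
        Finset.prod_congr rfl fun p _ => sum_low q j h (F p)

noncomputable def Middle (W : Bool → 𝒵 → ℝ) (q ℓ : ℕ) (M : Fin q → ℕ)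
    (c : ∀ t : Fin q, Fin (M t) → Fin ℓ → Bool) (j : ℕ) (hjq : j < q)
    (b : Fin ℓ → Bool) (zv : Fin ℓ → Fin (2^q) → 𝒵) : ℝ :=
  ∑ u : ∀ i : {i : Fin q // j+1 ≤ (i:ℕ)}, Fin (M i.1),
    (∏ i : {i : Fin q // j+1 ≤ (i:ℕ)}, ((M i.1 : ℝ))⁻¹) *
    ∏ p, (equivCh (W false) (W true) (j+1)
        (fun r => zv p (encF q j (hvF q ℓ M c j u p)
          (enc_bound q j (hvF q ℓ M c j u p) hjq (hvF_lt q ℓ M c j u p)) r)) (b p)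
      * ∏ pos ∈ univ.filter (fun pos : Fin (2^q) => ¬ ((pos:ℕ)/2^(j+1) = hvF q ℓ M c j u p)),
          W false (zv p pos))

lemma hR_lemma (W : Bool → 𝒵 → ℝ) (q ℓ : ℕ) (M : Fin q → ℕ)
    (c : ∀ t : Fin q, Fin (M t) → Fin ℓ → Bool) (j : ℕ) (hjq : j < q)
    (b : Fin ℓ → Bool) (zv : Fin ℓ → Fin (2^q) → 𝒵) :
    ∑ zeq : Fin ℓ → Fin (2^(j+1)) → 𝒵,
        (∏ p, equivCh (W false) (W true) (j+1) (zeq p) (b p)) * K2 W q ℓ M c j zeq zv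
      = Middle W q ℓ M c j hjq b zv := by
  calc ∑ zeq : Fin ℓ → Fin (2^(j+1)) → 𝒵,
        (∏ p, equivCh (W false) (W true) (j+1) (zeq p) (b p)) * K2 W q ℓ M c j zeq zv
      = ∑ zeq : Fin ℓ → Fin (2^(j+1)) → 𝒵,
          ∑ u : ∀ i : {i : Fin q // j+1 ≤ (i:ℕ)}, Fin (M i.1),
            (∏ i : {i : Fin q // j+1 ≤ (i:ℕ)}, ((M i.1 : ℝ))⁻¹) *
            ∏ p, (equivCh (W false) (W true) (j+1) (zeq p) (b p)
              * ∏ pos, gfun (W false) q j (hvF q ℓ M c j u p) (zeq p) pos (zv p pos)) := by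
        refine Finset.sum_congr rfl fun zeq _ => ?_
        unfold K2
        rw [Finset.mul_sum]
        refine Finset.sum_congr rfl fun u _ => ?_
        rw [Finset.prod_mul_distrib]
        ring
    _ = ∑ u : ∀ i : {i : Fin q // j+1 ≤ (i:ℕ)}, Fin (M i.1),
          ∑ zeq : Fin ℓ → Fin (2^(j+1)) → 𝒵,
            (∏ i : {i : Fin q // j+1 ≤ (i:ℕ)}, ((M i.1 : ℝ))⁻¹) *
            ∏ p, (equivCh (W false) (W true) (j+1) (zeq p) (b p)
              * ∏ pos, gfun (W false) q j (hvF q ℓ M c j u p) (zeq p) pos (zv p pos)) :=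
        Finset.sum_comm
    _ = Middle W q ℓ M c j hjq b zv := by
        unfold Middle
        refine Finset.sum_congr rfl fun u _ => ?_
        rw [← Finset.mul_sum]
        congr 1
        rw [show (∑ zeq : Fin ℓ → Fin (2^(j+1)) → 𝒵,
            ∏ p, (equivCh (W false) (W true) (j+1) (zeq p) (b p)
              * ∏ pos, gfun (W false) q j (hvF q ℓ M c j u p) (zeq p) pos (zv p pos)))
            = ∏ p, ∑ zb : Fin (2^(j+1)) → 𝒵,
                (equivCh (W false) (W true) (j+1) zb (b p)
                  * ∏ pos, gfun (W false) q j (hvF q ℓ M c j u p) zb pos (zv p pos)) from by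
          rw [Finset.prod_univ_sum, Fintype.piFinset_univ]]
        exact Finset.prod_congr rfl fun p _ => innerZsum W q j (hvF q ℓ M c j u p)
          (enc_bound q j (hvF q ℓ M c j u p) hjq (hvF_lt q ℓ M c j u p)) (zv p) (b p)

lemma hL_lemma (W : Bool → 𝒵 → ℝ) (hpos : ∀ z, 0 < W false z) (q ℓ : ℕ) (M : Fin q → ℕ)
    (c : ∀ t : Fin q, Fin (M t) → Fin ℓ → Bool) (j : ℕ) (hjq : j < q)
    (b : Fin ℓ → Bool) (zv : Fin ℓ → Fin (2^q) → 𝒵) :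
    Kker W q ℓ M c j b zv = Middle W q ℓ M c j hjq b zv := by
  unfold Kker Middle
  rw [Finset.sum_comm]
  refine Finset.sum_congr rfl fun u _ => ?_
  have hsup : ∀ (xs : {i : Fin q // (i:ℕ) < j} → Fin ℓ → Bool) (p : Fin ℓ),
      superCh W q (fun i => if h : (i:ℕ) < j then xs ⟨i, h⟩ p
          else if h2 : j+1 ≤ (i:ℕ) then c i (u ⟨i, h2⟩) p else b p) (zv p)
        = equivChArg W q j (hvF q ℓ M c j u p)
            (enc_bound q j (hvF q ℓ M c j u p) hjq (hvF_lt q ℓ M c j u p)) (zv p)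
            (∑ i : {i : Fin q // (i:ℕ) < j}, if xs i p then 2^((i.1:ℕ)) else 0) (b p)
          * ∏ pos ∈ univ.filter (fun pos : Fin (2^q) =>
              ¬((pos:ℕ)/2^(j+1) = hvF q ℓ M c j u p)), W false (zv p pos) := by
    intro xs p
    refine superCh_decomp' W hpos q j hjq _ (zv p) _ _ _ ?_ ?_ ?_ _
    · unfold hvF
      refine Finset.sum_congr rfl fun i _ => ?_
      have hi := i.2
      beta_reduce
      rw [dif_neg (show ¬ ((i.1:ℕ) < j) by omega), dif_pos i.2]
    · refine Finset.sum_congr rfl fun i _ => ?_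
      beta_reduce
      rw [dif_pos i.2]
    · beta_reduce
      rw [dif_neg (Nat.lt_irrefl j), dif_neg (Nat.not_succ_le_self j)]
  calc ∑ xs : {i : Fin q // (i:ℕ) < j} → Fin ℓ → Bool,
        ((∏ _i : {i : Fin q // (i:ℕ) < j}, ((2:ℝ)^ℓ)⁻¹) *
         (∏ i : {i : Fin q // j+1 ≤ (i:ℕ)}, ((M i.1 : ℝ))⁻¹) *
         ∏ p, superCh W q (fun i => if h : (i:ℕ) < j then xs ⟨i, h⟩ p
            else if h2 : j+1 ≤ (i:ℕ) then c i (u ⟨i, h2⟩) p else b p) (zv p))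
      = ((∏ _i : {i : Fin q // (i:ℕ) < j}, ((2:ℝ)^ℓ)⁻¹) *
         (∏ i : {i : Fin q // j+1 ≤ (i:ℕ)}, ((M i.1 : ℝ))⁻¹)) *
        ∑ xs : {i : Fin q // (i:ℕ) < j} → Fin ℓ → Bool,
          ∏ p, (equivChArg W q j (hvF q ℓ M c j u p)
              (enc_bound q j (hvF q ℓ M c j u p) hjq (hvF_lt q ℓ M c j u p)) (zv p)
              (∑ i : {i : Fin q // (i:ℕ) < j}, if xs i p then 2^((i.1:ℕ)) else 0) (b p)
            * ∏ pos ∈ univ.filter (fun pos : Fin (2^q) =>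
                ¬((pos:ℕ)/2^(j+1) = hvF q ℓ M c j u p)), W false (zv p pos)) := by
        rw [Finset.mul_sum]
        refine Finset.sum_congr rfl fun xs _ => ?_
        congr 1
        exact Finset.prod_congr rfl fun p _ => hsup xs p
    _ = ((∏ _i : {i : Fin q // (i:ℕ) < j}, ((2:ℝ)^ℓ)⁻¹) *
         (∏ i : {i : Fin q // j+1 ≤ (i:ℕ)}, ((M i.1 : ℝ))⁻¹)) *
        ∏ p, ∑ k ∈ Finset.range (2^j),
          (equivChArg W q j (hvF q ℓ M c j u p)
              (enc_bound q j (hvF q ℓ M c j u p) hjq (hvF_lt q ℓ M c j u p)) (zv p) k (b p)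
            * ∏ pos ∈ univ.filter (fun pos : Fin (2^q) =>
                ¬((pos:ℕ)/2^(j+1) = hvF q ℓ M c j u p)), W false (zv p pos)) := by
        congr 1
        exact sum_xs q j ℓ (le_of_lt hjq) (fun p k =>
          equivChArg W q j (hvF q ℓ M c j u p)
              (enc_bound q j (hvF q ℓ M c j u p) hjq (hvF_lt q ℓ M c j u p)) (zv p) k (b p)
            * ∏ pos ∈ univ.filter (fun pos : Fin (2^q) =>
                ¬((pos:ℕ)/2^(j+1) = hvF q ℓ M c j u p)), W false (zv p pos))
    _ = (∏ i : {i : Fin q // j+1 ≤ (i:ℕ)}, ((M i.1 : ℝ))⁻¹) *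
        ∏ p, (equivCh (W false) (W true) (j+1)
            (fun r => zv p (encF q j (hvF q ℓ M c j u p)
              (enc_bound q j (hvF q ℓ M c j u p) hjq (hvF_lt q ℓ M c j u p)) r)) (b p)
          * ∏ pos ∈ univ.filter (fun pos : Fin (2^q) =>
              ¬((pos:ℕ)/2^(j+1) = hvF q ℓ M c j u p)), W false (zv p pos)) := by
        rw [w2_eq q j ℓ (le_of_lt hjq)]
        rw [mul_comm (∏ _p : Fin ℓ, ((2:ℝ)^j)⁻¹)
          (∏ i : {i : Fin q // j+1 ≤ (i:ℕ)}, ((M i.1 : ℝ))⁻¹), mul_assoc,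
          ← Finset.prod_mul_distrib]
        congr 1
        refine Finset.prod_congr rfl fun p _ => ?_
        rw [equivCh_interval (W false) (W true) j
          (fun r => zv p (encF q j (hvF q ℓ M c j u p)
            (enc_bound q j (hvF q ℓ M c j u p) hjq (hvF_lt q ℓ M c j u p)) r)) (b p)]
        rw [← Finset.sum_mul]
        unfold equivChArg
        beta_reduce
        ring

lemma Kker_eq (W : Bool → 𝒵 → ℝ) (hpos : ∀ z, 0 < W false z) (q ℓ : ℕ) (M : Fin q → ℕ)
    (c : ∀ t : Fin q, Fin (M t) → Fin ℓ → Bool) (j : ℕ) (hjq : j < q)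
    (b : Fin ℓ → Bool) (zv : Fin ℓ → Fin (2^q) → 𝒵) :
    Kker W q ℓ M c j b zv
      = ∑ zeq : Fin ℓ → Fin (2^(j+1)) → 𝒵,
          (∏ p, equivCh (W false) (W true) (j+1) (zeq p) (b p)) * K2 W q ℓ M c j zeq zv :=
  (hL_lemma W hpos q ℓ M c j hjq b zv).trans (hR_lemma W q ℓ M c j hjq b zv).symm

lemma Pout_code (W : Bool → 𝒵 → ℝ) (q ℓ : ℕ) (M : Fin q → ℕ)
    (c : ∀ t : Fin q, Fin (M t) → Fin ℓ → Bool) (t : Fin q) :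
    Pout W q ℓ M c (t:ℕ)
      = fun zv => ((M t : ℝ))⁻¹ * ∑ u0 : Fin (M t), Kker W q ℓ M c (t:ℕ) (c t u0) zv := by
  funext zv
  unfold Pout Kker
  calc ∑ xs : {i : Fin q // (i:ℕ) < (t:ℕ)} → Fin ℓ → Bool,
        ∑ u : ∀ i : {i : Fin q // (t:ℕ) ≤ (i:ℕ)}, Fin (M i.1),
        (∏ _i : {i : Fin q // (i:ℕ) < (t:ℕ)}, ((2:ℝ)^ℓ)⁻¹) *
        (∏ i : {i : Fin q // (t:ℕ) ≤ (i:ℕ)}, ((M i.1 : ℝ))⁻¹) *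
        ∏ p, superCh W q (fun i => if h : (i:ℕ) < (t:ℕ) then xs ⟨i, h⟩ p
            else c i (u ⟨i, Nat.le_of_not_lt h⟩) p) (zv p)
      = ∑ xs : {i : Fin q // (i:ℕ) < (t:ℕ)} → Fin ℓ → Bool,
        ∑ u0 : Fin (M t),
        ∑ u' : ∀ i : {i : Fin q // (t:ℕ)+1 ≤ (i:ℕ)}, Fin (M i.1),
        (∏ _i : {i : Fin q // (i:ℕ) < (t:ℕ)}, ((2:ℝ)^ℓ)⁻¹) *
        (∏ i : {i : Fin q // (t:ℕ) ≤ (i:ℕ)}, ((M i.1 : ℝ))⁻¹) *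
        ∏ p, superCh W q (fun i => if h : (i:ℕ) < (t:ℕ) then xs ⟨i, h⟩ p
            else c i ((fun i' : {i : Fin q // (t:ℕ) ≤ (i:ℕ)} =>
                if hc : (t:ℕ)+1 ≤ (i'.1:ℕ) then u' ⟨i'.1, hc⟩
                else cast (congrArg (fun i'' : Fin q => Fin (M i''))
                  ((fun (i'' : Fin q) (h1 : (t:ℕ) ≤ (i'':ℕ)) (h2 : ¬ (t:ℕ)+1 ≤ (i'':ℕ)) =>
                    Fin.ext (by omega : (i'':ℕ) = (t:ℕ))) i'.1 i'.2 hc).symm) u0)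
              ⟨i, Nat.le_of_not_lt h⟩) p) (zv p) :=
        Finset.sum_congr rfl fun xs _ =>
          pi_split_sum (β := fun i : Fin q => Fin (M i))
            (P := fun i : Fin q => (t:ℕ) ≤ (i:ℕ)) (P' := fun i : Fin q => (t:ℕ)+1 ≤ (i:ℕ))
            t (le_refl _) (by omega)
            (fun i'' h1 h2 => Fin.ext (by omega : (i'':ℕ) = (t:ℕ)))
            (fun i'' h => by omega) _
    _ = ∑ u0 : Fin (M t), ∑ xs : {i : Fin q // (i:ℕ) < (t:ℕ)} → Fin ℓ → Bool,
        ∑ u' : ∀ i : {i : Fin q // (t:ℕ)+1 ≤ (i:ℕ)}, Fin (M i.1),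
        (∏ _i : {i : Fin q // (i:ℕ) < (t:ℕ)}, ((2:ℝ)^ℓ)⁻¹) *
        (∏ i : {i : Fin q // (t:ℕ) ≤ (i:ℕ)}, ((M i.1 : ℝ))⁻¹) *
        ∏ p, superCh W q (fun i => if h : (i:ℕ) < (t:ℕ) then xs ⟨i, h⟩ p
            else c i ((fun i' : {i : Fin q // (t:ℕ) ≤ (i:ℕ)} =>
                if hc : (t:ℕ)+1 ≤ (i'.1:ℕ) then u' ⟨i'.1, hc⟩
                else cast (congrArg (fun i'' : Fin q => Fin (M i''))
                  ((fun (i'' : Fin q) (h1 : (t:ℕ) ≤ (i'':ℕ)) (h2 : ¬ (t:ℕ)+1 ≤ (i'':ℕ)) =>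
                    Fin.ext (by omega : (i'':ℕ) = (t:ℕ))) i'.1 i'.2 hc).symm) u0)
              ⟨i, Nat.le_of_not_lt h⟩) p) (zv p) := Finset.sum_comm
    _ = ((M t : ℝ))⁻¹ * ∑ u0 : Fin (M t),
        ∑ xs : {i : Fin q // (i:ℕ) < (t:ℕ)} → Fin ℓ → Bool,
        ∑ u' : ∀ i : {i : Fin q // (t:ℕ)+1 ≤ (i:ℕ)}, Fin (M i.1),
        (∏ _i : {i : Fin q // (i:ℕ) < (t:ℕ)}, ((2:ℝ)^ℓ)⁻¹) *
        (∏ i : {i : Fin q // (t:ℕ)+1 ≤ (i:ℕ)}, ((M i.1 : ℝ))⁻¹) *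
        ∏ p, superCh W q (fun i => if h : (i:ℕ) < (t:ℕ) then xs ⟨i, h⟩ p
            else if h2 : (t:ℕ)+1 ≤ (i:ℕ) then c i (u' ⟨i, h2⟩) p else c t u0 p) (zv p) := by
        rw [Finset.mul_sum]
        refine Finset.sum_congr rfl fun u0 _ => ?_
        rw [Finset.mul_sum]
        refine Finset.sum_congr rfl fun xs _ => ?_
        rw [Finset.mul_sum]
        refine Finset.sum_congr rfl fun u' _ => ?_
        rw [prod_split_ge q t (fun i => ((M i : ℝ))⁻¹)]
        have hinput : ∀ p : Fin ℓ,
            superCh W q (fun i => if h : (i:ℕ) < (t:ℕ) then xs ⟨i, h⟩ p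
              else c i ((fun i' : {i : Fin q // (t:ℕ) ≤ (i:ℕ)} =>
                  if hc : (t:ℕ)+1 ≤ (i'.1:ℕ) then u' ⟨i'.1, hc⟩
                  else cast (congrArg (fun i'' : Fin q => Fin (M i''))
                    ((fun (i'' : Fin q) (h1 : (t:ℕ) ≤ (i'':ℕ)) (h2 : ¬ (t:ℕ)+1 ≤ (i'':ℕ)) =>
                      Fin.ext (by omega : (i'':ℕ) = (t:ℕ))) i'.1 i'.2 hc).symm) u0)
                ⟨i, Nat.le_of_not_lt h⟩) p) (zv p)
            = superCh W q (fun i => if h : (i:ℕ) < (t:ℕ) then xs ⟨i, h⟩ p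
                else if h2 : (t:ℕ)+1 ≤ (i:ℕ) then c i (u' ⟨i, h2⟩) p else c t u0 p) (zv p) := by
          intro p
          congr 1
          funext i
          by_cases h : (i:ℕ) < (t:ℕ)
          · rw [dif_pos h, dif_pos h]
          · rw [dif_neg h, dif_neg h]
            dsimp only
            by_cases hc : (t:ℕ)+1 ≤ (i:ℕ)
            · rw [dif_pos hc, dif_pos hc]
            · rw [dif_neg hc, dif_neg hc]
              have e : i = t := Fin.ext (by omega)
              subst e
              rfl
        rw [Finset.prod_congr rfl (fun p _ => hinput p)]
        ring
    _ = ((M t : ℝ))⁻¹ * ∑ u0 : Fin (M t),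
        ∑ xs : {i : Fin q // (i:ℕ) < (t:ℕ)} → Fin ℓ → Bool,
        ∑ u' : ∀ i : {i : Fin q // (t:ℕ)+1 ≤ (i:ℕ)}, Fin (M i.1),
        (∏ _i : {i : Fin q // (i:ℕ) < (t:ℕ)}, ((2:ℝ)^ℓ)⁻¹) *
        (∏ i : {i : Fin q // (t:ℕ)+1 ≤ (i:ℕ)}, ((M i.1 : ℝ))⁻¹) *
        ∏ p, superCh W q (fun i => if h : (i:ℕ) < (t:ℕ) then xs ⟨i, h⟩ p
            else if h2 : (t:ℕ)+1 ≤ (i:ℕ) then c i (u' ⟨i, h2⟩) p else c t u0 p) (zv p) := rfl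

lemma Pout_unif (W : Bool → 𝒵 → ℝ) (q ℓ : ℕ) (M : Fin q → ℕ)
    (c : ∀ t : Fin q, Fin (M t) → Fin ℓ → Bool) (t : Fin q) :
    Pout W q ℓ M c ((t:ℕ)+1)
      = fun zv => ∑ b : Fin ℓ → Bool, ((2:ℝ)^ℓ)⁻¹ * Kker W q ℓ M c (t:ℕ) b zv := by
  funext zv
  unfold Pout Kker
  calc ∑ xs : {i : Fin q // (i:ℕ) < (t:ℕ)+1} → Fin ℓ → Bool,
        ∑ u : ∀ i : {i : Fin q // (t:ℕ)+1 ≤ (i:ℕ)}, Fin (M i.1),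
        (∏ _i : {i : Fin q // (i:ℕ) < (t:ℕ)+1}, ((2:ℝ)^ℓ)⁻¹) *
        (∏ i : {i : Fin q // (t:ℕ)+1 ≤ (i:ℕ)}, ((M i.1 : ℝ))⁻¹) *
        ∏ p, superCh W q (fun i => if h : (i:ℕ) < (t:ℕ)+1 then xs ⟨i, h⟩ p
            else c i (u ⟨i, Nat.le_of_not_lt h⟩) p) (zv p)
      = ∑ b : Fin ℓ → Bool,
        ∑ xs : {i : Fin q // (i:ℕ) < (t:ℕ)} → Fin ℓ → Bool,
        ∑ u : ∀ i : {i : Fin q // (t:ℕ)+1 ≤ (i:ℕ)}, Fin (M i.1),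
        (∏ _i : {i : Fin q // (i:ℕ) < (t:ℕ)+1}, ((2:ℝ)^ℓ)⁻¹) *
        (∏ i : {i : Fin q // (t:ℕ)+1 ≤ (i:ℕ)}, ((M i.1 : ℝ))⁻¹) *
        ∏ p, superCh W q (fun i => if h : (i:ℕ) < (t:ℕ)+1 then
              (fun i' : {i : Fin q // (i:ℕ) < (t:ℕ)+1} =>
                if hc : (i'.1:ℕ) < (t:ℕ) then xs ⟨i'.1, hc⟩
                else cast (congrArg (fun _ : Fin q => Fin ℓ → Bool)
                  ((fun (i'' : Fin q) (h1 : (i'':ℕ) < (t:ℕ)+1) (h2 : ¬ (i'':ℕ) < (t:ℕ)) =>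
                    Fin.ext (by omega : (i'':ℕ) = (t:ℕ))) i'.1 i'.2 hc).symm) b) ⟨i, h⟩ p
            else c i (u ⟨i, Nat.le_of_not_lt h⟩) p) (zv p) :=
        pi_split_sum (β := fun _ : Fin q => Fin ℓ → Bool)
          (P := fun i : Fin q => (i:ℕ) < (t:ℕ)+1) (P' := fun i : Fin q => (i:ℕ) < (t:ℕ))
          t (by omega) (by omega)
          (fun i'' h1 h2 => Fin.ext (by omega : (i'':ℕ) = (t:ℕ)))
          (fun i'' h => by omega) _
    _ = ∑ b : Fin ℓ → Bool, ((2:ℝ)^ℓ)⁻¹ *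
        ∑ xs : {i : Fin q // (i:ℕ) < (t:ℕ)} → Fin ℓ → Bool,
        ∑ u : ∀ i : {i : Fin q // (t:ℕ)+1 ≤ (i:ℕ)}, Fin (M i.1),
        (∏ _i : {i : Fin q // (i:ℕ) < (t:ℕ)}, ((2:ℝ)^ℓ)⁻¹) *
        (∏ i : {i : Fin q // (t:ℕ)+1 ≤ (i:ℕ)}, ((M i.1 : ℝ))⁻¹) *
        ∏ p, superCh W q (fun i => if h : (i:ℕ) < (t:ℕ) then xs ⟨i, h⟩ p
            else if h2 : (t:ℕ)+1 ≤ (i:ℕ) then c i (u ⟨i, h2⟩) p else b p) (zv p) := by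
        refine Finset.sum_congr rfl fun b _ => ?_
        rw [Finset.mul_sum]
        refine Finset.sum_congr rfl fun xs _ => ?_
        rw [Finset.mul_sum]
        refine Finset.sum_congr rfl fun u _ => ?_
        rw [wlow_split q (t:ℕ) t.2 (((2:ℝ)^ℓ)⁻¹)]
        have hinput : ∀ p : Fin ℓ,
            superCh W q (fun i => if h : (i:ℕ) < (t:ℕ)+1 then
              (fun i' : {i : Fin q // (i:ℕ) < (t:ℕ)+1} =>
                if hc : (i'.1:ℕ) < (t:ℕ) then xs ⟨i'.1, hc⟩
                else cast (congrArg (fun _ : Fin q => Fin ℓ → Bool)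
                  ((fun (i'' : Fin q) (h1 : (i'':ℕ) < (t:ℕ)+1) (h2 : ¬ (i'':ℕ) < (t:ℕ)) =>
                    Fin.ext (by omega : (i'':ℕ) = (t:ℕ))) i'.1 i'.2 hc).symm) b) ⟨i, h⟩ p
              else c i (u ⟨i, Nat.le_of_not_lt h⟩) p) (zv p)
            = superCh W q (fun i => if h : (i:ℕ) < (t:ℕ) then xs ⟨i, h⟩ p
                else if h2 : (t:ℕ)+1 ≤ (i:ℕ) then c i (u ⟨i, h2⟩) p else b p) (zv p) := by
          intro p
          congr 1
          funext i
          by_cases hc : (i:ℕ) < (t:ℕ)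
          · rw [dif_pos (show (i:ℕ) < (t:ℕ)+1 by omega)]
            dsimp only
            rw [dif_pos hc, dif_pos hc]
          · by_cases h2 : (t:ℕ)+1 ≤ (i:ℕ)
            · rw [dif_neg (show ¬ (i:ℕ) < (t:ℕ)+1 by omega), dif_neg hc, dif_pos h2]
            · rw [dif_pos (show (i:ℕ) < (t:ℕ)+1 by omega)]
              dsimp only
              rw [dif_neg hc, dif_neg hc, dif_neg h2]
              rfl
        rw [Finset.prod_congr rfl (fun p _ => hinput p)]
        ring

lemma ind_eq_ite (P : Prop) [Decidable P] : ind P = if P then (1:ℝ) else 0 := by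
  unfold ind
  by_cases h : P
  · rw [if_pos h, if_pos h]
  · rw [if_neg h, if_neg h]

lemma sum_ind_eq {α : Type} [Fintype α] [DecidableEq α] (v : α) :
    ∑ y : α, ind (y = v) = 1 := by
  rw [Finset.sum_congr rfl fun y _ => ind_eq_ite (y = v)]
  simp [Finset.sum_ite_eq' univ]

lemma K2_nonneg (W : Bool → 𝒵 → ℝ) (hW : ∀ x, IsPMF (W x)) (q ℓ : ℕ) (M : Fin q → ℕ)
    (c : ∀ t : Fin q, Fin (M t) → Fin ℓ → Bool) (j : ℕ)
    (zeq : Fin ℓ → Fin (2^(j+1)) → 𝒵) (zv : Fin ℓ → Fin (2^q) → 𝒵) :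
    0 ≤ K2 W q ℓ M c j zeq zv := by
  unfold K2
  refine Finset.sum_nonneg fun u _ => mul_nonneg ?_ ?_
  · exact Finset.prod_nonneg fun i _ => inv_nonneg.mpr (Nat.cast_nonneg _)
  · refine Finset.prod_nonneg fun p _ => Finset.prod_nonneg fun pos _ => ?_
    unfold gfun
    split
    · unfold ind; split <;> norm_num
    · exact (hW false).1 _

lemma K2_rowsum (W : Bool → 𝒵 → ℝ) (hW : ∀ x, IsPMF (W x)) (q ℓ : ℕ) (M : Fin q → ℕ)
    (hM : ∀ i, 1 ≤ M i)
    (c : ∀ t : Fin q, Fin (M t) → Fin ℓ → Bool) (j : ℕ)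
    (zeq : Fin ℓ → Fin (2^(j+1)) → 𝒵) :
    ∑ zv : Fin ℓ → Fin (2^q) → 𝒵, K2 W q ℓ M c j zeq zv = 1 := by
  unfold K2
  rw [Finset.sum_comm]
  have hgy : ∀ (HV : ℕ) (zb : Fin (2^(j+1)) → 𝒵) (pos : Fin (2^q)),
      ∑ y : 𝒵, gfun (W false) q j HV zb pos y = 1 := by
    intro HV zb pos
    unfold gfun
    split
    · exact sum_ind_eq _
    · exact (hW false).2
  have hone : ∀ u : ∀ i : {i : Fin q // j+1 ≤ (i:ℕ)}, Fin (M i.1),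
      (∑ zv : Fin ℓ → Fin (2^q) → 𝒵,
        ∏ p, ∏ pos, gfun (W false) q j (hvF q ℓ M c j u p) (zeq p) pos (zv p pos)) = 1 := by
    intro u
    have h1 : (∑ zv : Fin ℓ → Fin (2^q) → 𝒵,
        ∏ p, ∏ pos, gfun (W false) q j (hvF q ℓ M c j u p) (zeq p) pos (zv p pos))
        = ∏ p, ∑ zz : Fin (2^q) → 𝒵,
            ∏ pos, gfun (W false) q j (hvF q ℓ M c j u p) (zeq p) pos (zz pos) := by
      rw [Finset.prod_univ_sum, Fintype.piFinset_univ]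
    rw [h1]
    refine Finset.prod_eq_one fun p _ => ?_
    have h2 : (∑ zz : Fin (2^q) → 𝒵,
        ∏ pos, gfun (W false) q j (hvF q ℓ M c j u p) (zeq p) pos (zz pos))
        = ∏ pos, ∑ y : 𝒵, gfun (W false) q j (hvF q ℓ M c j u p) (zeq p) pos y := by
      rw [Finset.prod_univ_sum, Fintype.piFinset_univ]
    rw [h2]
    exact Finset.prod_eq_one fun pos _ => hgy _ _ pos
  calc ∑ u : ∀ i : {i : Fin q // j+1 ≤ (i:ℕ)}, Fin (M i.1),
        ∑ zv : Fin ℓ → Fin (2^q) → 𝒵,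
        (∏ i : {i : Fin q // j+1 ≤ (i:ℕ)}, ((M i.1 : ℝ))⁻¹) *
        ∏ p, ∏ pos, gfun (W false) q j (hvF q ℓ M c j u p) (zeq p) pos (zv p pos)
      = ∑ u : ∀ i : {i : Fin q // j+1 ≤ (i:ℕ)}, Fin (M i.1),
          (∏ i : {i : Fin q // j+1 ≤ (i:ℕ)}, ((M i.1 : ℝ))⁻¹) := by
        refine Finset.sum_congr rfl fun u _ => ?_
        rw [← Finset.mul_sum, hone u, mul_one]
    _ = 1 := by
        rw [Finset.sum_const, Finset.card_univ, Fintype.card_pi]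
        simp only [Fintype.card_fin]
        rw [nsmul_eq_mul, Nat.cast_prod, ← Finset.prod_mul_distrib]
        refine Finset.prod_eq_one fun i _ => ?_
        refine mul_inv_cancel₀ (Nat.cast_ne_zero.mpr ?_)
        have := hM i.1
        omega

lemma Qmatch (W : Bool → 𝒵 → ℝ) (ℓ j : ℕ) (zeq : Fin ℓ → Fin (2^(j+1)) → 𝒵) :
    ∑ b : Fin ℓ → Bool, ((2:ℝ)^ℓ)⁻¹ * ∏ p, equivCh (W false) (W true) (j+1) (zeq p) (b p)
      = ∏ p, ((1:ℝ)/2 * equivCh (W false) (W true) (j+1) (zeq p) false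
          + (1:ℝ)/2 * equivCh (W false) (W true) (j+1) (zeq p) true) := by
  have h1 : ((2:ℝ)^ℓ)⁻¹ = ∏ _p : Fin ℓ, ((1:ℝ)/2) := by
    rw [Finset.prod_const, Finset.card_univ, Fintype.card_fin, one_div, inv_pow]
  calc ∑ b : Fin ℓ → Bool, ((2:ℝ)^ℓ)⁻¹ * ∏ p, equivCh (W false) (W true) (j+1) (zeq p) (b p)
      = ∑ b : Fin ℓ → Bool, ∏ p, ((1:ℝ)/2 * equivCh (W false) (W true) (j+1) (zeq p) (b p)) := by
        refine Finset.sum_congr rfl fun b _ => ?_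
        rw [h1, ← Finset.prod_mul_distrib]
    _ = ∏ p, ∑ x : Bool, ((1:ℝ)/2 * equivCh (W false) (W true) (j+1) (zeq p) x) := by
        rw [Finset.prod_univ_sum, Fintype.piFinset_univ]
    _ = ∏ p, ((1:ℝ)/2 * equivCh (W false) (W true) (j+1) (zeq p) false
          + (1:ℝ)/2 * equivCh (W false) (W true) (j+1) (zeq p) true) := by
        refine Finset.prod_congr rfl fun p _ => ?_
        rw [Fintype.sum_bool]
        ring

lemma level_step (W : Bool → 𝒵 → ℝ) (hW : ∀ x, IsPMF (W x)) (hpos : ∀ z, 0 < W false z)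
    (q ℓ : ℕ) (M : Fin q → ℕ) (hM : ∀ i, 1 ≤ M i)
    (c : ∀ t : Fin q, Fin (M t) → Fin ℓ → Bool) (t : Fin q) :
    TV (Pout W q ℓ M c (t:ℕ)) (Pout W q ℓ M c ((t:ℕ)+1))
      ≤ TV (fun zv : Fin ℓ → Fin (2^((t:ℕ)+1)) → 𝒵 =>
            (M t : ℝ)⁻¹ * ∑ u : Fin (M t),
              ∏ p, equivCh (W false) (W true) ((t:ℕ)+1) (zv p) (c t u p))
         (fun zv => ∏ p, ((1:ℝ)/2 * equivCh (W false) (W true) ((t:ℕ)+1) (zv p) false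
            + (1:ℝ)/2 * equivCh (W false) (W true) ((t:ℕ)+1) (zv p) true)) := by
  have e1 : Pout W q ℓ M c (t:ℕ)
      = fun zv => ∑ zeq : Fin ℓ → Fin (2^((t:ℕ)+1)) → 𝒵,
          ((M t : ℝ)⁻¹ * ∑ u : Fin (M t),
            ∏ p, equivCh (W false) (W true) ((t:ℕ)+1) (zeq p) (c t u p))
          * K2 W q ℓ M c (t:ℕ) zeq zv := by
    rw [Pout_code W q ℓ M c t]
    funext zv
    beta_reduce
    rw [Finset.sum_congr rfl fun u0 _ => Kker_eq W hpos q ℓ M c (t:ℕ) t.2 (c t u0) zv]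
    rw [Finset.sum_comm, Finset.mul_sum]
    refine Finset.sum_congr rfl fun zeq _ => ?_
    rw [← Finset.sum_mul, mul_assoc]
  have e2 : Pout W q ℓ M c ((t:ℕ)+1)
      = fun zv => ∑ zeq : Fin ℓ → Fin (2^((t:ℕ)+1)) → 𝒵,
          (∏ p, ((1:ℝ)/2 * equivCh (W false) (W true) ((t:ℕ)+1) (zeq p) false
            + (1:ℝ)/2 * equivCh (W false) (W true) ((t:ℕ)+1) (zeq p) true))
          * K2 W q ℓ M c (t:ℕ) zeq zv := by
    rw [Pout_unif W q ℓ M c t]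
    funext zv
    beta_reduce
    rw [Finset.sum_congr rfl fun b _ => by
      rw [Kker_eq W hpos q ℓ M c (t:ℕ) t.2 b zv, Finset.mul_sum]]
    rw [Finset.sum_comm]
    refine Finset.sum_congr rfl fun zeq _ => ?_
    rw [← Qmatch W ℓ (t:ℕ) zeq, Finset.sum_mul]
    refine Finset.sum_congr rfl fun b _ => ?_
    ring
  rw [e1, e2]
  exact TV_contract _ _ (K2 W q ℓ M c (t:ℕ))
    (fun zeq zv => K2_nonneg W hW q ℓ M c (t:ℕ) zeq zv)
    (fun zeq => K2_rowsum W hW q ℓ M hM c (t:ℕ) zeq)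

lemma Pout_top (W : Bool → 𝒵 → ℝ) (q ℓ : ℕ) (M : Fin q → ℕ)
    (c : ∀ t : Fin q, Fin (M t) → Fin ℓ → Bool) :
    Pout W q ℓ M c q
      = fun zv => ∏ p, ((2:ℝ)^q)⁻¹ * ∑ x : Fin q → Bool, superCh W q x (zv p) := by
  funext zv
  unfold Pout
  haveI hempty : IsEmpty {i : Fin q // q ≤ (i:ℕ)} := ⟨fun i => absurd i.1.2 (not_lt.mpr i.2)⟩
  calc ∑ xs : {i : Fin q // (i:ℕ) < q} → Fin ℓ → Bool,
        ∑ u : ∀ i : {i : Fin q // q ≤ (i:ℕ)}, Fin (M i.1),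
        (∏ _i : {i : Fin q // (i:ℕ) < q}, ((2:ℝ)^ℓ)⁻¹) *
        (∏ i : {i : Fin q // q ≤ (i:ℕ)}, ((M i.1 : ℝ))⁻¹) *
        ∏ p, superCh W q (fun i => if h : (i:ℕ) < q then xs ⟨i, h⟩ p
            else c i (u ⟨i, Nat.le_of_not_lt h⟩) p) (zv p)
      = ∑ xs : {i : Fin q // (i:ℕ) < q} → Fin ℓ → Bool,
          ∏ p, (((2:ℝ)^q)⁻¹ * superCh W q (fun i => xs ⟨i, i.2⟩ p) (zv p)) := by
        refine Finset.sum_congr rfl fun xs _ => ?_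
        rw [Fintype.sum_unique]
        rw [Finset.univ_eq_empty (α := {i : Fin q // q ≤ (i:ℕ)}), Finset.prod_empty, mul_one]
        rw [w2_eq q q ℓ le_rfl, ← Finset.prod_mul_distrib]
        refine Finset.prod_congr rfl fun p _ => ?_
        refine congrArg (fun X => ((2:ℝ)^q)⁻¹ * superCh W q X (zv p)) ?_
        funext i
        rw [dif_pos i.2]
    _ = ∑ Y : Fin ℓ → (Fin q → Bool),
          ∏ p, (((2:ℝ)^q)⁻¹ * superCh W q (Y p) (zv p)) := by
        refine Fintype.sum_equiv
          (((Equiv.arrowCongr (eS q q le_rfl) (Equiv.refl (Fin ℓ → Bool))).symm).trans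
            (Equiv.piComm fun (_ : Fin q) (_ : Fin ℓ) => Bool)) _ _ (fun xs => rfl)
    _ = ∏ p, ∑ x : Fin q → Bool, (((2:ℝ)^q)⁻¹ * superCh W q x (zv p)) := by
        rw [Finset.prod_univ_sum, Fintype.piFinset_univ]
    _ = ∏ p, (((2:ℝ)^q)⁻¹ * ∑ x : Fin q → Bool, superCh W q x (zv p)) := by
        refine Finset.prod_congr rfl fun p _ => ?_
        rw [Finset.mul_sum]

end Main


/-- Lemma 6 (covertness of MLC-PPM from per-level resolvability): if the code of
(0-indexed) level `t` achieves resolvability `δ_t` in total variation for the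
memoryless extension of its equivalent channel, then
`V(P_Z̃^{(t)}, P_Z̃^{(t+1)}) ≤ δ_t` regardless of the codebooks of the higher levels;
consequently if this holds for every level, then
`V(P_Z̃, (Q_PPM^m)^{⊗ℓ}) ≤ ∑_t δ_t`. -/
theorem stmt17 {𝒵 : Type} [Fintype 𝒵] [DecidableEq 𝒵]
    (q ℓ : ℕ) (hq : 1 ≤ q) (hℓ : 1 ≤ ℓ)
    (W : Bool → 𝒵 → ℝ) (hW : ∀ x, IsPMF (W x)) (hpos : ∀ z, 0 < W false z)
    (M : Fin q → ℕ) (hM : ∀ t, 1 ≤ M t)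
    (c : ∀ t : Fin q, Fin (M t) → Fin ℓ → Bool)
    (δ : Fin q → ℝ) :
    (∀ t : Fin q,
      TV (fun zv : Fin ℓ → Fin (2^((t:ℕ)+1)) → 𝒵 =>
            (M t : ℝ)⁻¹ * ∑ u : Fin (M t),
              ∏ p, equivCh (W false) (W true) ((t:ℕ)+1) (zv p) (c t u p))
         (fun zv => ∏ p, ((1:ℝ)/2 * equivCh (W false) (W true) ((t:ℕ)+1) (zv p) false
            + (1:ℝ)/2 * equivCh (W false) (W true) ((t:ℕ)+1) (zv p) true)) ≤ δ t →
      TV (Pout W q ℓ M c (t:ℕ)) (Pout W q ℓ M c ((t:ℕ)+1)) ≤ δ t) ∧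
    ((∀ t : Fin q,
      TV (fun zv : Fin ℓ → Fin (2^((t:ℕ)+1)) → 𝒵 =>
            (M t : ℝ)⁻¹ * ∑ u : Fin (M t),
              ∏ p, equivCh (W false) (W true) ((t:ℕ)+1) (zv p) (c t u p))
         (fun zv => ∏ p, ((1:ℝ)/2 * equivCh (W false) (W true) ((t:ℕ)+1) (zv p) false
            + (1:ℝ)/2 * equivCh (W false) (W true) ((t:ℕ)+1) (zv p) true)) ≤ δ t) →
      TV (Pout W q ℓ M c 0)
         (fun zv => ∏ p, ((2:ℝ)^q)⁻¹ * ∑ x : Fin q → Bool, superCh W q x (zv p))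
        ≤ ∑ t, δ t) := by
  have hstep : ∀ t : Fin q,
      TV (fun zv : Fin ℓ → Fin (2^((t:ℕ)+1)) → 𝒵 =>
            (M t : ℝ)⁻¹ * ∑ u : Fin (M t),
              ∏ p, equivCh (W false) (W true) ((t:ℕ)+1) (zv p) (c t u p))
         (fun zv => ∏ p, ((1:ℝ)/2 * equivCh (W false) (W true) ((t:ℕ)+1) (zv p) false
            + (1:ℝ)/2 * equivCh (W false) (W true) ((t:ℕ)+1) (zv p) true)) ≤ δ t →
      TV (Pout W q ℓ M c (t:ℕ)) (Pout W q ℓ M c ((t:ℕ)+1)) ≤ δ t :=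
    fun t h => (level_step W hW hpos q ℓ M hM c t).trans h
  refine ⟨hstep, ?_⟩
  intro hall
  have hδ : ∀ t : Fin q, TV (Pout W q ℓ M c (t:ℕ)) (Pout W q ℓ M c ((t:ℕ)+1)) ≤ δ t :=
    fun t => hstep t (hall t)
  have key : ∀ n, n ≤ q → TV (Pout W q ℓ M c 0) (Pout W q ℓ M c n)
      ≤ ∑ t ∈ univ.filter (fun t : Fin q => (t:ℕ) < n), δ t := by
    intro n
    induction n with
    | zero =>
      intro _
      have h0 : (univ.filter (fun t : Fin q => (t:ℕ) < 0)) = ∅ := by ext i; simp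
      rw [h0, Finset.sum_empty]
      exact le_of_eq (TV_self _)
    | succ n ih =>
      intro hn
      have hn' : n < q := hn
      have h2 := hδ ⟨n, hn'⟩
      have hset : univ.filter (fun t : Fin q => (t:ℕ) < n+1)
          = insert (⟨n, hn'⟩ : Fin q) (univ.filter (fun t : Fin q => (t:ℕ) < n)) := by
        ext i
        simp only [mem_filter, mem_univ, true_and, Finset.mem_insert, Fin.ext_iff]
        omega
      rw [hset, Finset.sum_insert (by simp)]
      calc TV (Pout W q ℓ M c 0) (Pout W q ℓ M c (n+1))
          ≤ TV (Pout W q ℓ M c 0) (Pout W q ℓ M c n)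
            + TV (Pout W q ℓ M c n) (Pout W q ℓ M c (n+1)) := TV_triangle _ _ _
        _ ≤ (∑ t ∈ univ.filter (fun t : Fin q => (t:ℕ) < n), δ t) + δ ⟨n, hn'⟩ :=
            add_le_add (ih (le_of_lt hn')) h2
        _ = δ ⟨n, hn'⟩ + ∑ t ∈ univ.filter (fun t : Fin q => (t:ℕ) < n), δ t := add_comm _ _
  have hfin := key q le_rfl
  rw [show (univ.filter (fun t : Fin q => (t:ℕ) < q)) = univ from by
    ext i; simp [i.2]] at hfin
  rw [← Pout_top W q ℓ M c]
  exact hfin
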